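/- arXiv:2101.10040 — 2 statements merged into one kernel-verified Lean document; each statement's English description precedes it below -/
import Mathlib

section
/- Let A ∈ ℝ^{2n×n²} be the vertically stacked incidence matrix encoding the row-sum and column-sum constraints of the Birkhoff polytope (first n rows: block row-sums; last n rows: n copies of the identity Iₙ side by side). Then A† = Aᵀ/n − J_{n²,2n}/(2n²) is the Moore–Penrose pseudoinverse of A, where J_{n²,2n} is the all-ones matrix. -/
open Matrix

/-- The Birkhoff constraint matrix `A ∈ ℝ^{2n×n²}`: rows indexed by
`Sum (Fin n) (Fin n)` (row-sum constraints then column-sum constraints), columns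
indexed by `Fin n × Fin n` (matrix entries). -/
def birkhoffA (n : ℕ) : Matrix (Fin n ⊕ Fin n) (Fin n × Fin n) ℝ :=
  fun r c => match r with
  | Sum.inl i => if c.1 = i then 1 else 0
  | Sum.inr j => if c.2 = j then 1 else 0

/-- The claimed Moore–Penrose pseudoinverse `A† = Aᵀ/n − J/(2n²)`. -/
noncomputable def birkhoffAdagger (n : ℕ) : Matrix (Fin n × Fin n) (Fin n ⊕ Fin n) ℝ :=
  (1 / (n : ℝ)) • (birkhoffA n)ᵀ - (1 / (2 * (n : ℝ) ^ 2)) • (Matrix.of fun (_ : Fin n × Fin n) (_ : Fin n ⊕ Fin n) => (1 : ℝ))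

lemma dag_apply (n : ℕ) (c : Fin n × Fin n) (r : Fin n ⊕ Fin n) :
    birkhoffAdagger n c r = (1 / (n : ℝ)) * birkhoffA n r c - 1 / (2 * (n:ℝ)^2) := by
  simp [birkhoffAdagger, Matrix.sub_apply, Matrix.smul_apply, transpose_apply]

lemma hQ (n : ℕ) (hn : 0 < n) (r s : Fin n ⊕ Fin n) :
    (birkhoffA n * birkhoffAdagger n) r s =
      (if r = s then 1 else 0) +
      (match r, s with
       | Sum.inl _, Sum.inl _ => -(1 / (2*(n:ℝ)))
       | Sum.inr _, Sum.inr _ => -(1 / (2*(n:ℝ)))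
       | _, _ => 1 / (2*(n:ℝ))) := by
  have hn' : (n:ℝ) ≠ 0 := Nat.cast_ne_zero.mpr hn.ne'
  rcases r with i | i <;> rcases s with j | j <;>
    simp only [mul_apply, dag_apply, birkhoffA, Fintype.sum_prod_type, mul_sub, ite_mul,
      one_mul, zero_mul, mul_ite, mul_one, mul_zero, Finset.sum_sub_distrib,
      Finset.sum_ite_eq', Finset.mem_univ, if_true, Finset.sum_const, Finset.card_univ,
      Fintype.card_fin, nsmul_eq_mul, Sum.inl.injEq, Sum.inr.injEq, reduceCtorEq, if_false] <;>
  [skip; skip; skip; skip] <;>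
  · rcases eq_or_ne i j with h | h
    · subst h
      simp [Finset.sum_ite_eq', Finset.sum_const, mul_ite, Finset.mul_sum]
      field_simp
      ring
    · simp [h, h.symm, Finset.sum_ite_eq', Finset.sum_const, mul_ite, Finset.mul_sum]
      field_simp
      all_goals ring

lemma hP (n : ℕ) (hn : 0 < n) (c d : Fin n × Fin n) :
    (birkhoffAdagger n * birkhoffA n) c d =
      ((if c.1 = d.1 then 1 else 0) + (if c.2 = d.2 then 1 else 0)) / n - 1 / (n:ℝ)^2 := by
  have hn' : (n:ℝ) ≠ 0 := Nat.cast_ne_zero.mpr hn.ne'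
  obtain ⟨i, j⟩ := c; obtain ⟨i', j'⟩ := d
  simp only [mul_apply, dag_apply, birkhoffA, Fintype.sum_sum_type]
  simp [sub_mul, mul_ite, Finset.sum_sub_distrib, Finset.sum_ite_eq', eq_comm (a := i'),
    eq_comm (a := j'), Finset.sum_const]
  rcases eq_or_ne i i' with h | h <;> rcases eq_or_ne j j' with h2 | h2 <;>
    simp [h, h2] <;> field_simp <;> ring


/-- `A† = Aᵀ/n − J_{n²,2n}/(2n²)` satisfies the four Penrose conditions, hence is
the Moore–Penrose pseudoinverse of the Birkhoff constraint matrix `A`. -/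
theorem birkhoff_pseudoinverse (n : ℕ) (hn : 0 < n) :
    birkhoffA n * birkhoffAdagger n * birkhoffA n = birkhoffA n ∧
    birkhoffAdagger n * birkhoffA n * birkhoffAdagger n = birkhoffAdagger n ∧
    (birkhoffA n * birkhoffAdagger n)ᵀ = birkhoffA n * birkhoffAdagger n ∧
    (birkhoffAdagger n * birkhoffA n)ᵀ = birkhoffAdagger n * birkhoffA n := by
  have hn' : (n:ℝ) ≠ 0 := Nat.cast_ne_zero.mpr hn.ne'
  refine ⟨?_, ?_, ?_, ?_⟩
  · ext r c
    simp only [mul_apply (M := birkhoffA n * birkhoffAdagger n), hQ n hn, birkhoffA, Fintype.sum_sum_type]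
    rcases r with i | i <;>
      simp [add_mul, ite_mul, mul_ite, Finset.sum_add_distrib, Finset.sum_ite_eq',
        Finset.sum_const, eq_comm (a := c.1), eq_comm (a := c.2)]
  · ext c r
    simp only [mul_apply (M := birkhoffAdagger n * birkhoffA n), hP n hn, dag_apply, birkhoffA, Fintype.sum_prod_type]
    obtain ⟨i, j⟩ := c
    rcases r with k | k <;>
      simp only [sub_mul, mul_sub, add_mul, ite_mul, mul_ite, one_mul, zero_mul, mul_one,
        mul_zero, add_div, Finset.sum_sub_distrib, Finset.sum_add_distrib, Finset.sum_ite_eq',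
        Finset.mem_univ, if_true, Finset.sum_const, Finset.card_univ, Fintype.card_fin,
        nsmul_eq_mul, smul_eq_mul, div_eq_mul_inv] <;>
      [rcases eq_or_ne i k with h | h; rcases eq_or_ne j k with h | h] <;>
      simp [h, Finset.sum_ite_eq', Finset.sum_ite_eq, Finset.sum_add_distrib, ite_mul, Finset.sum_const, mul_ite, Finset.mul_sum] <;>
      field_simp <;> ring
  · ext r s
    rcases r with i | i <;> rcases s with j | j <;>
      simp [transpose_apply, hQ n hn, eq_comm]
  · ext c d
    simp [transpose_apply, hP n hn, eq_comm]
end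

section
/- With A ∈ ℝ^{2n×n²} the Birkhoff constraint matrix and A† its Moore–Penrose pseudoinverse, the matrix A†A ∈ ℝ^{n²×n²} equals (1/n²) times the block matrix whose diagonal blocks are B₁ = nIₙ + (n−1)Jₙ and whose off-diagonal blocks are B₂ = nIₙ − Jₙ, where Jₙ is the n×n all-ones matrix. In particular, A†A has only three distinct entries (up to the factor 1/n²): 2n−1, n−1, and −1. -/
open Matrix

/-- `A†A` is the `n²×n²` block matrix `(1/n²)` times the matrix with diagonal blocks
`B₁ = nIₙ + (n−1)Jₙ` and off-diagonal blocks `B₂ = nIₙ − Jₙ`. -/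
theorem birkhoff_AdaggerA (n : ℕ) (hn : 0 < n) :
    ∀ i k j l : Fin n,
      (birkhoffAdagger n * birkhoffA n) (i, k) (j, l) =
        (1 / (n : ℝ) ^ 2) *
          (if i = j then
            (n : ℝ) * (if k = l then 1 else 0) + ((n : ℝ) - 1)
          else
            (n : ℝ) * (if k = l then 1 else 0) - 1) := by
  intro i k j l
  have hn' : (n : ℝ) ≠ 0 := Nat.cast_ne_zero.mpr hn.ne'
  simp only [mul_apply, birkhoffAdagger, birkhoffA, Matrix.sub_apply, Matrix.smul_apply, transpose_apply,
    of_apply, Fintype.sum_sum_type, smul_eq_mul, mul_ite, ite_mul, mul_one, mul_zero, one_mul,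
    zero_mul, sub_mul, zero_sub, sub_zero, Finset.sum_ite_eq, Finset.sum_ite_eq',
    Finset.mem_univ, if_true, Finset.sum_sub_distrib, Finset.sum_const, Finset.card_univ,
    Fintype.card_fin, nsmul_eq_mul]
  by_cases h1 : i = j <;> by_cases h2 : k = l <;> simp [h1, h2, eq_comm] <;> field_simp <;> ring
end
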